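/- Define sequences of Gaussian integers a_n, b_n, c_n by a_0 = 1, b_0 = i, c_0 = i, and the recurrences a_{n+3} = 3 a_{n+2} + 3 a_{n+1} - a_n (similarly for b and c) with initial values a_0 = 1, a_1 = 3, a_2 = 13; b_0 = i, b_1 = -2+3i, b_2 = -6+11i; c_0 = i, c_1 = 2+3i, c_2 = 6+11i. Then for all n, a_n^5 + b_n^5 = c_n^5 + (-1)^n. -/
import Mathlib

theorem stmt_12 (a b c : ℕ → GaussianInt)
    (ha0 : a 0 = 1) (ha1 : a 1 = 3) (ha2 : a 2 = 13)
    (hb0 : b 0 = Zsqrtd.sqrtd) (hb1 : b 1 = -2 + 3 * Zsqrtd.sqrtd) (hb2 : b 2 = -6 + 11 * Zsqrtd.sqrtd)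
    (hc0 : c 0 = Zsqrtd.sqrtd) (hc1 : c 1 = 2 + 3 * Zsqrtd.sqrtd) (hc2 : c 2 = 6 + 11 * Zsqrtd.sqrtd)
    (hra : ∀ n, a (n+3) = 3 * a (n+2) + 3 * a (n+1) - a n)
    (hrb : ∀ n, b (n+3) = 3 * b (n+2) + 3 * b (n+1) - b n)
    (hrc : ∀ n, c (n+3) = 3 * c (n+2) + 3 * c (n+1) - c n) :
    ∀ n : ℕ, (a n)^5 + (b n)^5 = (c n)^5 + (-1)^n := by
  have H : ∀ n : ℕ,
      (a n + b n - c n = (-1)^n) ∧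
      (a (n+1) + b (n+1) - c (n+1) = (-1)^(n+1)) ∧
      (a (n+2) + b (n+2) - c (n+2) = (-1)^(n+2)) ∧
      (a n * a n + b n * b n + c n * c n = -1) ∧
      (a n * a (n+1) + b n * b (n+1) + c n * c (n+1) = -3) ∧
      (a n * a (n+2) + b n * b (n+2) + c n * c (n+2) = -9) ∧
      (a (n+1) * a (n+1) + b (n+1) * b (n+1) + c (n+1) * c (n+1) = -1) ∧
      (a (n+1) * a (n+2) + b (n+1) * b (n+2) + c (n+1) * c (n+2) = -3) ∧
      (a (n+2) * a (n+2) + b (n+2) * b (n+2) + c (n+2) * c (n+2) = -1) := by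
    intro n
    induction n with
    | zero =>
      rw [show (0:ℕ)+1 = 1 from rfl, show (0:ℕ)+2 = 2 from rfl,
        ha0, ha1, ha2, hb0, hb1, hb2, hc0, hc1, hc2]
      refine ⟨by decide, by decide, by decide, by decide, by decide, by decide,
        by decide, by decide, by decide⟩
    | succ n ih =>
      obtain ⟨E0, E1, E2, T00, T01, T02, T11, T12, T22⟩ := ih
      have hA := hra n
      have hB := hrb n
      have hC := hrc n
      refine ⟨E1, E2, ?_, T11, T12, ?_, T22, ?_, ?_⟩
      · show a (n+3) + b (n+3) - c (n+3) = (-1)^(n+3)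
        simp only [pow_succ] at E0 E1 E2 ⊢
        linear_combination hA + hB - hC + 3*E2 + 3*E1 - E0
      · show a (n+1) * a (n+3) + b (n+1) * b (n+3) + c (n+1) * c (n+3) = -9
        linear_combination (a (n+1))*hA + (b (n+1))*hB + (c (n+1))*hC
          + 3*T12 + 3*T11 - T01
      · show a (n+2) * a (n+3) + b (n+2) * b (n+3) + c (n+2) * c (n+3) = -3
        linear_combination (a (n+2))*hA + (b (n+2))*hB + (c (n+2))*hC
          + 3*T22 + 3*T12 - T02
      · show a (n+3) * a (n+3) + b (n+3) * b (n+3) + c (n+3) * c (n+3) = -1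
        linear_combination (a (n+3) + 3*a (n+2) + 3*a (n+1) - a n)*hA
          + (b (n+3) + 3*b (n+2) + 3*b (n+1) - b n)*hB
          + (c (n+3) + 3*c (n+2) + 3*c (n+1) - c n)*hC
          + 9*T22 + 9*T11 + T00 + 18*T12 - 6*T02 - 6*T01
  intro n
  obtain ⟨E0, -, -, T00, -⟩ := H n
  have he : ((-1 : GaussianInt))^n * (-1)^n = 1 := by
    rw [← pow_add, ← two_mul, pow_mul, neg_one_sq, one_pow]
  generalize hE : ((-1 : GaussianInt))^n = e at E0 he ⊢
  have hc' : c n = a n + b n - e := by linear_combination -E0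
  have h2 : (2 : GaussianInt) ≠ 0 := by decide
  have hX : a n * a n + b n * b n + a n * b n - a n * e - b n * e + 1 = 0 := by
    have h2X : (2 : GaussianInt) *
        (a n * a n + b n * b n + a n * b n - a n * e - b n * e + 1) = 2 * 0 := by
      rw [hc'] at T00
      linear_combination T00 - he
    exact mul_left_cancel₀ h2 h2X
  rw [hc']
  linear_combination
    ((-5)*(a n)^2*(b n) + 5*(a n)^2*e + (-5)*(a n)*(b n)^2 + 10*(a n)*(b n)*e
      + (-5)*(a n)*e^2 + 5*(b n)^2*e + (-10)*(b n)*e^2 + 5*(b n) + 5*e^3 + (-5)*e) * hX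
    + (5*(b n)^3 + (-5)*(b n)^2*e + 5*(b n) + e^3 + (-4)*e) * he
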